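/- If Conjecture R holds for n (i.e., the sequence obtained by iterating 𝔑(n) = σ(n) if n odd, n/2 if n even, starting from n, eventually reaches 1) for all odd n, then there is no odd positive integer N with σ(N) = 2^k · N for any k ≥ 1. In particular, under this hypothesis there is no odd perfect number. -/

import Mathlib

def R (n : ℕ) : ℕ := if Odd n then ArithmeticFunction.sigma 1 n else n / 2

theorem stmt11
    (hconj : ∀ n : ℕ, 1 ≤ n → Odd n → ∃ k : ℕ, R^[k] n = 1) :
    ¬ ∃ (N k : ℕ), Odd N ∧ 2 ≤ N ∧ 1 ≤ k ∧ ArithmeticFunction.sigma 1 N = 2 ^ k * N := by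
  rintro ⟨N, k, hodd, hN2, hk, hsig⟩
  have key : ∀ m : ℕ, ∃ j : ℕ, j ≤ k ∧ R^[m] N = 2 ^ j * N := by
    intro m
    induction m with
    | zero => exact ⟨0, Nat.zero_le _, by simp⟩
    | succ m ih =>
      obtain ⟨j, hj, hm⟩ := ih
      rw [Function.iterate_succ_apply', hm]
      rcases Nat.eq_zero_or_pos j with hj0 | hj0
      · subst hj0
        refine ⟨k, le_refl _, ?_⟩
        rw [show (2:ℕ)^0 * N = N by ring]
        simpa [R, hodd] using hsig
      · refine ⟨j - 1, le_trans (Nat.sub_le _ _) hj, ?_⟩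
        have heven : ¬ Odd (2 ^ j * N) := by
          rw [Nat.not_odd_iff_even, Nat.even_mul, Nat.even_pow]
          exact Or.inl ⟨even_two, hj0.ne'⟩
        simp only [R, if_neg heven]
        have : 2 ^ j = 2 * 2 ^ (j - 1) := by
          rw [← pow_succ']
          congr 1
          omega
        rw [this, mul_assoc, Nat.mul_div_cancel_left _ (by norm_num)]
  obtain ⟨m, hm⟩ := hconj N (by omega) hodd
  obtain ⟨j, hj, hmN⟩ := key m
  rw [hm] at hmN
  have : 2 ^ j * N ≥ N := Nat.le_mul_of_pos_left _ (Nat.pow_pos (by norm_num))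
  omega
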